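/- (Opial's lemma) Let S ⊆ ℝⁿ be nonempty and x : [0,∞) → ℝⁿ. If (i) every limit point of x(t) as t → ∞ belongs to S, and (ii) for every z ∈ S the limit lim_{t→∞} ‖x(t) − z‖ exists, then x(t) converges to some point x^∞ ∈ S as t → ∞. -/

import Mathlib

open Filter

theorem stmt_7 (n : ℕ) (S : Set (EuclideanSpace ℝ (Fin n))) (hS : S.Nonempty)
    (x : ℝ → EuclideanSpace ℝ (Fin n))
    (h1 : ∀ y : EuclideanSpace ℝ (Fin n),
      (∃ t : ℕ → ℝ, Tendsto t atTop atTop ∧ Tendsto (fun k => x (t k)) atTop (nhds y)) → y ∈ S)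
    (h2 : ∀ z ∈ S, ∃ l : ℝ, Tendsto (fun t => ‖x t - z‖) atTop (nhds l)) :
    ∃ xinf ∈ S, Tendsto x atTop (nhds xinf) := by
  obtain ⟨z, hz⟩ := hS
  obtain ⟨l, hl⟩ := h2 z hz
  have hev : ∀ᶠ t in atTop, ‖x t - z‖ ≤ l + 1 :=
    hl.eventually_le_const (lt_add_one l)
  obtain ⟨T, hT⟩ := eventually_atTop.mp hev
  set u : ℕ → EuclideanSpace ℝ (Fin n) := fun k => x (T + k) with hu_def
  have hu : ∀ k, u k ∈ Metric.closedBall z (l + 1) := fun k => by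
    simp only [Metric.mem_closedBall, dist_eq_norm, hu_def]
    exact hT _ (le_add_of_nonneg_right (Nat.cast_nonneg k))
  obtain ⟨y, hyball, φ, hφ, hconv⟩ :=
    (isCompact_closedBall z (l + 1)).tendsto_subseq hu
  have ht : Tendsto (fun j => T + (φ j : ℝ)) atTop atTop :=
    tendsto_atTop_add_const_left _ _
      (tendsto_natCast_atTop_atTop.comp hφ.tendsto_atTop)
  have hy : y ∈ S := h1 y ⟨_, ht, by simpa [hu_def, Function.comp_def] using hconv⟩
  obtain ⟨l', hl'⟩ := h2 y hy
  have h0 : l' = 0 := by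
    have ha : Tendsto (fun j => ‖x (T + (φ j : ℝ)) - y‖) atTop (nhds l') :=
      hl'.comp ht
    have hb : Tendsto (fun j => ‖x (T + (φ j : ℝ)) - y‖) atTop (nhds 0) := by
      simpa [hu_def, Function.comp] using
        (tendsto_iff_norm_sub_tendsto_zero.mp hconv)
    exact tendsto_nhds_unique ha hb
  refine ⟨y, hy, ?_⟩
  rw [h0] at hl'
  exact tendsto_iff_norm_sub_tendsto_zero.mpr hl'
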